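/- The radarization map Rad_v maps the time axis bijectively onto the time axis: for x ∈ ℝ⁴, the spatial part of x is zero if and only if the spatial part of Rad_v(x) is zero; moreover Rad_v scales the time axis by the factor √(1 - |v|²/c²). -/

import Mathlib

noncomputable section
open Classical

/-- Euclidean norm of a velocity vector in `ℝ³`. -/
def nv (v : Fin 3 → ℝ) : ℝ := Real.sqrt ((v 0)^2 + (v 1)^2 + (v 2)^2)

/-- The rotation matrix used when `v_y ≠ 0` or `v_z ≠ 0`. -/
def rotMatrix (vx vy vz : ℝ) : Matrix (Fin 4) (Fin 4) ℝ :=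
  (Real.sqrt (vx^2 + vy^2 + vz^2))⁻¹ •
    ![![Real.sqrt (vx^2 + vy^2 + vz^2), 0, 0, 0],
      ![0, -vx, -vy, -vz],
      ![0, vy, -vx - vz^2 * (Real.sqrt (vx^2 + vy^2 + vz^2) - vx) / (vy^2 + vz^2),
        vy * vz * (Real.sqrt (vx^2 + vy^2 + vz^2) - vx) / (vy^2 + vz^2)],
      ![0, vz, vy * vz * (Real.sqrt (vx^2 + vy^2 + vz^2) - vx) / (vy^2 + vz^2),
        -vx - vy^2 * (Real.sqrt (vx^2 + vy^2 + vz^2) - vx) / (vy^2 + vz^2)]]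

/-- The spatial rotation `R_v` taking direction `(1, v)` to `(1, -|v|, 0, 0)`. -/
def Rv (v : Fin 3 → ℝ) : Matrix (Fin 4) (Fin 4) ℝ :=
  if v 1 ≠ 0 ∨ v 2 ≠ 0 then rotMatrix (v 0) (v 1) (v 2)
  else if 0 < v 0 then
    ![![1, 0, 0, 0], ![0, -1, 0, 0], ![0, 0, -1, 0], ![0, 0, 0, -1]]
  else 1

/-- The Galilean boost `G_w : (t,x,y,z) ↦ (t, x + wt, y, z)`. -/
def galBoost (w : ℝ) (x : Fin 4 → ℝ) : Fin 4 → ℝ :=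
  ![x 0, x 1 + w * x 0, x 2, x 3]

/-- The Poincaré–Einstein synchronisation matrix `E_w`. -/
def Emat (c w : ℝ) : Matrix (Fin 4) (Fin 4) ℝ :=
  ![![1 / (1 - w^2/c^2), (-w/c^2) / (1 - w^2/c^2), 0, 0],
    ![-w / (1 - w^2/c^2), 1 / (1 - w^2/c^2), 0, 0],
    ![0, 0, 1 / Real.sqrt (1 - w^2/c^2), 0],
    ![0, 0, 0, 1 / Real.sqrt (1 - w^2/c^2)]]

/-- The radarization map `Rad_v = R_v⁻¹ ∘ S_{|v|} ∘ E_{|v|} ∘ G_{|v|} ∘ R_v`. -/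
def rad (c : ℝ) (v : Fin 3 → ℝ) (x : Fin 4 → ℝ) : Fin 4 → ℝ :=
  (Rv v)⁻¹.mulVec (Real.sqrt (1 - (nv v)^2/c^2) •
    (Emat c (nv v)).mulVec (galBoost (nv v) ((Rv v).mulVec x)))

/-! auxiliary -/

def auxM (vx vy vz s r : ℝ) : Matrix (Fin 4) (Fin 4) ℝ :=
  s⁻¹ • ![![s, 0, 0, 0],
      ![0, -vx, -vy, -vz],
      ![0, vy, -vx - vz^2 * r, vy * vz * r],
      ![0, vz, vy * vz * r, -vx - vy^2 * r]]

set_option maxHeartbeats 1000000 in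
lemma aux_orth (vx vy vz s r : ℝ) (hs2 : s^2 = vx^2 + vy^2 + vz^2) (hs0 : s ≠ 0)
    (hr1 : (vy^2 + vz^2) * r = s - vx) (hr2 : (s + vx) * r = 1) :
    auxM vx vy vz s r * (auxM vx vy vz s r).transpose = 1 := by
  ext i j
  simp only [Matrix.mul_apply, Matrix.transpose_apply]
  fin_cases i <;> fin_cases j <;>
    simp [auxM, Matrix.mul_apply, Fin.sum_univ_four, Matrix.one_apply, Matrix.transpose_apply] <;>
    field_simp <;> ring_nf
  · linear_combination -hs2
  · linear_combination vz^2 * hr2 + vz^2*r*hr1 - hs2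
  · linear_combination -vy*vz*hr2 - vy*vz*r*hr1
  · linear_combination -vy*vz*hr2 - vy*vz*r*hr1
  · linear_combination vy^2 * hr2 + vy^2*r*hr1 - hs2

lemma auxM_time (vx vy vz s r t : ℝ) (hs0 : s ≠ 0) :
    (auxM vx vy vz s r).mulVec ![t, 0, 0, 0] = ![t, 0, 0, 0] := by
  funext i
  fin_cases i <;>
    simp [auxM, Matrix.mulVec, dotProduct, Fin.sum_univ_four] <;>
    field_simp

lemma rot_eq_aux (vx vy vz : ℝ) :
    rotMatrix vx vy vz =
      auxM vx vy vz (Real.sqrt (vx^2 + vy^2 + vz^2))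
        ((Real.sqrt (vx^2 + vy^2 + vz^2) - vx) / (vy^2 + vz^2)) := by
  unfold rotMatrix auxM
  generalize Real.sqrt (vx^2 + vy^2 + vz^2) = s
  congr 1
  ext i j
  fin_cases i <;> fin_cases j <;> simp <;> ring

lemma Rv_mul_transpose (v : Fin 3 → ℝ) : Rv v * (Rv v).transpose = 1 := by
  unfold Rv
  split_ifs with h h2
  · have hq : (0:ℝ) < v 1 ^ 2 + v 2 ^ 2 := by
      rcases h with h | h
      · have : 0 < v 1 ^ 2 := by positivity
        nlinarith [sq_nonneg (v 2)]
      · have : 0 < v 2 ^ 2 := by positivity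
        nlinarith [sq_nonneg (v 1)]
    have hn : (0:ℝ) < v 0 ^ 2 + v 1 ^ 2 + v 2 ^ 2 := by nlinarith [sq_nonneg (v 0)]
    set s := Real.sqrt (v 0 ^ 2 + v 1 ^ 2 + v 2 ^ 2) with hsdef
    have hs2 : s ^ 2 = v 0 ^ 2 + v 1 ^ 2 + v 2 ^ 2 := Real.sq_sqrt hn.le
    have hs0 : 0 < s := Real.sqrt_pos.mpr hn
    rw [rot_eq_aux]
    apply aux_orth _ _ _ _ _ hs2 hs0.ne'
    · field_simp
      rw [hsdef]
    · field_simp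
      nlinarith [hs2]
  · ext i j
    simp only [Matrix.mul_apply, Matrix.transpose_apply]
    fin_cases i <;> fin_cases j <;>
      simp [h2, Matrix.mul_apply, Fin.sum_univ_four, Matrix.one_apply, Matrix.transpose_apply]
  · simp [h2]

lemma Rv_transpose_mul (v : Fin 3 → ℝ) : (Rv v).transpose * Rv v = 1 :=
  mul_eq_one_comm.mp (Rv_mul_transpose v)

lemma Rv_inv (v : Fin 3 → ℝ) : (Rv v)⁻¹ = (Rv v).transpose :=
  Matrix.inv_eq_right_inv (Rv_mul_transpose v)

lemma Rv_time (v : Fin 3 → ℝ) (t : ℝ) :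
    (Rv v).mulVec ![t, 0, 0, 0] = ![t, 0, 0, 0] := by
  unfold Rv
  split_ifs with h h2
  · have hq : (0:ℝ) < v 1 ^ 2 + v 2 ^ 2 := by
      rcases h with h | h
      · have : 0 < v 1 ^ 2 := by positivity
        nlinarith [sq_nonneg (v 2)]
      · have : 0 < v 2 ^ 2 := by positivity
        nlinarith [sq_nonneg (v 1)]
    have hn : (0:ℝ) < v 0 ^ 2 + v 1 ^ 2 + v 2 ^ 2 := by nlinarith [sq_nonneg (v 0)]
    rw [rot_eq_aux]
    exact auxM_time _ _ _ _ _ _ (Real.sqrt_pos.mpr hn).ne'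
  · funext i
    fin_cases i <;>
      simp [h2, Matrix.mulVec, dotProduct, Fin.sum_univ_four]
  · simp [h2]

lemma Rv_transpose_time (v : Fin 3 → ℝ) (t : ℝ) :
    (Rv v).transpose.mulVec ![t, 0, 0, 0] = ![t, 0, 0, 0] := by
  conv_lhs => rw [← Rv_time v t]
  rw [Matrix.mulVec_mulVec, Rv_transpose_mul, Matrix.one_mulVec]

/-- `Rad_v` maps the time axis bijectively onto the time axis and scales it by
the factor `√(1 - |v|²/c²)`. -/
theorem rad_time_axis (c : ℝ) (hc : 0 < c) (v : Fin 3 → ℝ) (hv : nv v < c) :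
    (∀ x : Fin 4 → ℝ,
      (x 1 = 0 ∧ x 2 = 0 ∧ x 3 = 0) ↔
        ((rad c v x) 1 = 0 ∧ (rad c v x) 2 = 0 ∧ (rad c v x) 3 = 0)) ∧
    (∀ t : ℝ, rad c v ![t, 0, 0, 0]
      = ![Real.sqrt (1 - (nv v)^2/c^2) * t, 0, 0, 0]) := by
  set w := nv v with hwdef
  have hw0 : 0 ≤ w := Real.sqrt_nonneg _
  have hd : (0:ℝ) < 1 - w^2/c^2 := by
    have : w^2 < c^2 := by nlinarith
    have hc2 : (0:ℝ) < c^2 := by positivity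
    rw [sub_pos, div_lt_one hc2]
    exact this
  set d := 1 - w^2/c^2 with hddef
  set sq := Real.sqrt d with hsqdef
  have hsq : 0 < sq := Real.sqrt_pos.mpr hd
  have hsq2 : sq^2 = d := Real.sq_sqrt hd.le
  -- core computation
  have hcore : ∀ y : Fin 4 → ℝ,
      (sq • (Emat c w).mulVec (galBoost w y)) 1 = sq / d * y 1 ∧
      (sq • (Emat c w).mulVec (galBoost w y)) 2 = y 2 ∧
      (sq • (Emat c w).mulVec (galBoost w y)) 3 = y 3 := by
    intro y
    refine ⟨?_, ?_, ?_⟩ <;>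
      simp [Emat, galBoost, Matrix.mulVec, dotProduct, Fin.sum_univ_four, ← hddef,
        ← hsqdef]
    · ring
    · field_simp
    · field_simp
  have htime : ∀ t : ℝ, rad c v ![t, 0, 0, 0] = ![sq * t, 0, 0, 0] := by
    intro t
    rw [rad, Rv_inv, ← hwdef, ← hddef, ← hsqdef, Rv_time]
    have : sq • (Emat c w).mulVec (galBoost w ![t, 0, 0, 0]) = ![sq * t, 0, 0, 0] := by
      funext i
      have hI : c * c⁻¹ = 1 := mul_inv_cancel₀ hc.ne'
      fin_cases i <;>
        simp [Emat, galBoost, Matrix.mulVec, dotProduct, Fin.sum_univ_four, ← hddef,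
          ← hsqdef] <;>
        field_simp [hc.ne', hd.ne', hsq.ne']
      left
      rw [hddef]
      linear_combination (t * w^2 * (c * c⁻¹ + 1)) * hI
      simp
    rw [this, Rv_transpose_time]
  refine ⟨?_, htime⟩
  intro x
  constructor
  · rintro ⟨h1, h2, h3⟩
    have hx : x = ![x 0, 0, 0, 0] := by
      funext i; fin_cases i <;> simp [h1, h2, h3]
    rw [hx, htime]
    simp
  · rintro ⟨h1, h2, h3⟩
    -- let z be the middle vector
    set y := (Rv v).mulVec x with hydef
    set z := sq • (Emat c w).mulVec (galBoost w y) with hzdef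
    have hrad : rad c v x = (Rv v).transpose.mulVec z := by
      rw [rad, Rv_inv, ← hwdef, ← hddef, ← hsqdef, ← hydef, ← hzdef]
    have hz : z = (Rv v).mulVec (rad c v x) := by
      rw [hrad, Matrix.mulVec_mulVec, Rv_mul_transpose, Matrix.one_mulVec]
    have hradx : rad c v x = ![rad c v x 0, 0, 0, 0] := by
      funext i; fin_cases i <;> simp [h1, h2, h3]
    have hz' : z = ![rad c v x 0, 0, 0, 0] := by
      rw [hz, hradx, Rv_time]; simp
    obtain ⟨hc1, hc2, hc3⟩ := hcore y
    have hy1 : y 1 = 0 := by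
      have : sq / d * y 1 = 0 := by rw [← hc1, ← hzdef, hz']; simp
      have hne : sq / d ≠ 0 := div_ne_zero hsq.ne' hd.ne'
      exact (mul_eq_zero.mp this).resolve_left hne
    have hy2 : y 2 = 0 := by rw [← hc2, ← hzdef, hz']; simp
    have hy3 : y 3 = 0 := by rw [← hc3, ← hzdef, hz']; simp
    have hy : y = ![y 0, 0, 0, 0] := by
      funext i; fin_cases i <;> simp [hy1, hy2, hy3]
    have hx : x = ![y 0, 0, 0, 0] := by
      have : (Rv v).transpose.mulVec y = x := by
        rw [hydef, Matrix.mulVec_mulVec, Rv_transpose_mul, Matrix.one_mulVec]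
      rw [← this, hy, Rv_transpose_time]; simp
    rw [hx]
    exact ⟨rfl, rfl, rfl⟩
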